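/- Consider jigsaw percolation with arbitrary thresholds σ ≥ 1, τ ≥ 1, θ ≥ τ on any pair of graphs (G_puz, G_ppl) on a finite vertex set V of size N, started from the partition into singletons. Then: (i) for every time t, every part of the partition 𝒫^t is internally solved; and (ii) if Solve occurs, then for every integer k with 1 ≤ k ≤ N/2 there exists a set A ⊆ V with k ≤ |A| ≤ 2k such that A is internally solved. -/

import Mathlib

open scoped Classical
open Filter

noncomputable section

namespace JigsawPerc

variable {V : Type*}

/-- Number of `G`-neighbors of `v` inside `S` (not including `v`). -/
def nbrCount (G : SimpleGraph V) (v : V) (S : Set V) : ℕ :=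
  {u ∈ S | G.Adj v u}.ncard

/-- One-directional merging condition, (J1)–(J3), from part `Wi` toward part `Wj`. -/
def LinkedDir (Gpuz Gppl : SimpleGraph V) (σ τ : ℕ) (θ : ℕ∞) (Wi Wj : Set V) : Prop :=
  (∃ v₁ ∈ Wi, ∃ v₂ ∈ Wj, Gppl.Adj v₁ v₂ ∧ Gpuz.Adj v₁ v₂) ∨
  (∃ v₁ ∈ Wi, θ ≤ (nbrCount Gpuz v₁ Wj : ℕ∞)) ∨
  (∃ v₁ ∈ Wi, σ ≤ nbrCount Gppl v₁ Wj ∧ τ ≤ nbrCount Gpuz v₁ Wj)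

/-- Two distinct parts are linked when (J1), (J2) or (J3) holds in one of the two directions. -/
def Linked (Gpuz Gppl : SimpleGraph V) (σ τ : ℕ) (θ : ℕ∞) (Wi Wj : Set V) : Prop :=
  Wi ≠ Wj ∧ (LinkedDir Gpuz Gppl σ τ θ Wi Wj ∨ LinkedDir Gpuz Gppl σ τ θ Wj Wi)

/-- One step of the jigsaw dynamics: merge all parts lying in the same connected
component of the `Linked` graph on parts. -/
def step (Gpuz Gppl : SimpleGraph V) (σ τ : ℕ) (θ : ℕ∞) (P : Set (Set V)) : Set (Set V) :=
  { U | ∃ W ∈ P, U = ⋃₀ {W' | W' ∈ P ∧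
      Relation.EqvGen (fun A B => A ∈ P ∧ B ∈ P ∧ Linked Gpuz Gppl σ τ θ A B) W W'} }

/-- The partition at time `t`, started from the partition into singletons. -/
def partAt (Gpuz Gppl : SimpleGraph V) (σ τ : ℕ) (θ : ℕ∞) (t : ℕ) : Set (Set V) :=
  (step Gpuz Gppl σ τ θ)^[t] {S : Set V | ∃ v, S = {v}}

/-- The event that the puzzle is solved: at some time all vertices form one single part. -/
def Solve (Gpuz Gppl : SimpleGraph V) (σ τ : ℕ) (θ : ℕ∞) : Prop :=
  ∃ t, partAt Gpuz Gppl σ τ θ t = {Set.univ}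

/-- `A` is internally solved: jigsaw percolation on the induced subgraphs solves `A`. -/
def SolveIn (Gpuz Gppl : SimpleGraph V) (σ τ : ℕ) (θ : ℕ∞) (A : Set V) : Prop :=
  Solve (Gpuz.induce A) (Gppl.induce A) σ τ θ

/-- The people graph determined by a configuration of the off-diagonal edge indicators. -/
def graphOf (ω : {e : Sym2 V // ¬ e.IsDiag} → Bool) : SimpleGraph V :=
  SimpleGraph.fromEdgeSet {e | ∃ h : ¬ e.IsDiag, ω ⟨e, h⟩ = true}

/-- Probability, under the Erdős–Rényi measure with edge probability `p` on the vertex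
set `V`, of the people-graph event `A`. -/
def erProb [Fintype V] (p : ℝ) (A : SimpleGraph V → Prop) : ℝ :=
  ∑ ω : {e : Sym2 V // ¬ e.IsDiag} → Bool,
    if A (graphOf ω) then ∏ e, (if ω e then p else 1 - p) else 0

/-- Probability that jigsaw percolation with puzzle graph `Gpuz`, Erdős–Rényi people graph
with edge probability `p`, and thresholds `σ, τ, θ` solves the puzzle. -/
def solveProb [Fintype V] (Gpuz : SimpleGraph V) (σ τ : ℕ) (θ : ℕ∞) (p : ℝ) : ℝ :=
  erProb p fun Gppl => Solve Gpuz Gppl σ τ θ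

/-- The `d`-dimensional discrete torus on `ℤ_n^d`: nearest-neighbor adjacency with
periodic boundary conditions. -/
def torus (d n : ℕ) : SimpleGraph (Fin d → Fin n) :=
  SimpleGraph.fromRel fun x y =>
    ∃ i, (∀ j, j ≠ i → x j = y j) ∧ ((x i : ℕ) + 1) % n = (y i : ℕ)

/-- The ring (cycle) graph on `ℤ_n`. -/
def ring (n : ℕ) : SimpleGraph (Fin n) :=
  SimpleGraph.fromRel fun x y => ((x : ℕ) + 1) % n = (y : ℕ)

/-- `P(Poisson(x) ≥ σ) = e^{-x} ∑_{i=σ}^∞ x^i/i!`. -/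
def poissonTail (σ : ℕ) (x : ℝ) : ℝ :=
  Real.exp (-x) * ∑' i : ℕ, x ^ (σ + i) / (σ + i).factorial

/-- `g_σ(x) = -log P(Poisson(x) ≥ σ)`. -/
def gPois (σ : ℕ) (x : ℝ) : ℝ := -Real.log (poissonTail σ x)

/-- `λ_σ = ∫_0^∞ g_σ(x) dx`. -/
def lambdaC (σ : ℕ) : ℝ := ∫ x in Set.Ioi (0 : ℝ), gPois σ x

/-- `ν_σ = ∫_0^∞ -log(1 - exp(-x^{2σ+1}/σ!)) dx`. -/
def nuC (σ : ℕ) : ℝ :=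
  ∫ x in Set.Ioi (0 : ℝ), -Real.log (1 - Real.exp (-(x ^ (2 * σ + 1) / (σ.factorial : ℝ))))

namespace Aux13

variable [Fintype V] (Gpuz Gppl : SimpleGraph V) (σ τ : ℕ) (θ : ℕ∞)

/-- The set of singletons of elements of `A`. -/
def sing (A : Set V) : Set (Set V) := {S | ∃ v ∈ A, S = {v}}

/-- The relation used inside `step`. -/
def rel (P : Set (Set V)) (A B : Set V) : Prop :=
  A ∈ P ∧ B ∈ P ∧ Linked Gpuz Gppl σ τ θ A B

/-- `A` is solved by the relativized dynamics (ambient graphs, parts inside `A`). -/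
def solveSet (A : Set V) : Prop :=
  ∃ t, (step Gpuz Gppl σ τ θ)^[t] (sing A) = {A}

variable {Gpuz Gppl σ τ θ}

lemma mem_step {P U : _} :
    U ∈ step Gpuz Gppl σ τ θ P ↔
      ∃ W ∈ P, U = ⋃₀ {W' | W' ∈ P ∧ Relation.EqvGen (rel Gpuz Gppl σ τ θ P) W W'} :=
  Iff.rfl

lemma nbrCount_mono (G : SimpleGraph V) (v : V) {S T : Set V} (h : S ⊆ T) :
    nbrCount G v S ≤ nbrCount G v T :=
  Set.ncard_le_ncard (fun u hu => ⟨h hu.1, hu.2⟩) (Set.toFinite _)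

lemma linkedDir_mono {Wi Wj Wi' Wj' : Set V}
    (h : LinkedDir Gpuz Gppl σ τ θ Wi Wj) (h₁ : Wi ⊆ Wi') (h₂ : Wj ⊆ Wj') :
    LinkedDir Gpuz Gppl σ τ θ Wi' Wj' := by
  rcases h with ⟨v₁, hv₁, v₂, hv₂, h⟩ | ⟨v₁, hv₁, h⟩ | ⟨v₁, hv₁, hp, hq⟩
  · exact Or.inl ⟨v₁, h₁ hv₁, v₂, h₂ hv₂, h⟩
  · refine Or.inr (Or.inl ⟨v₁, h₁ hv₁, le_trans h ?_⟩)
    exact_mod_cast Nat.cast_le.mpr (nbrCount_mono Gpuz v₁ h₂)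
  · exact Or.inr (Or.inr ⟨v₁, h₁ hv₁,
      le_trans hp (nbrCount_mono Gppl v₁ h₂), le_trans hq (nbrCount_mono Gpuz v₁ h₂)⟩)

lemma linked_symm {A B : Set V} (h : Linked Gpuz Gppl σ τ θ A B) :
    Linked Gpuz Gppl σ τ θ B A :=
  ⟨h.1.symm, h.2.symm⟩

lemma Linked.lift {A B A' B' : Set V} (h : Linked Gpuz Gppl σ τ θ A B)
    (h₁ : A ⊆ A') (h₂ : B ⊆ B') (hne : A' ≠ B') :
    Linked Gpuz Gppl σ τ θ A' B' := by
  refine ⟨hne, ?_⟩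
  rcases h.2 with h' | h'
  · exact Or.inl (linkedDir_mono h' h₁ h₂)
  · exact Or.inr (linkedDir_mono h' h₂ h₁)

/-- classes of `EqvGen`-related elements coincide -/
lemma class_eq {r : Set V → Set V → Prop} {P : Set (Set V)} {W₁ W₂ : Set V}
    (h : Relation.EqvGen r W₁ W₂) :
    {W' | W' ∈ P ∧ Relation.EqvGen r W₁ W'} = {W' | W' ∈ P ∧ Relation.EqvGen r W₂ W'} := by
  ext X
  exact ⟨fun hx => ⟨hx.1, (h.symm _ _).trans _ _ _ hx.2⟩,
    fun hx => ⟨hx.1, h.trans _ _ _ hx.2⟩⟩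

lemma step_fixed (A : Set V) : step Gpuz Gppl σ τ θ {A} = {A} := by
  have hcl : ∀ W, W ∈ ({A} : Set (Set V)) →
      {W' | W' ∈ ({A} : Set (Set V)) ∧ Relation.EqvGen
        (fun X Y => X ∈ ({A} : Set (Set V)) ∧ Y ∈ ({A} : Set (Set V)) ∧
          Linked Gpuz Gppl σ τ θ X Y) W W'} = {A} := by
    intro W hW
    ext X
    simp only [Set.mem_setOf_eq, Set.mem_singleton_iff]
    constructor
    · rintro ⟨h1, -⟩; exact h1
    · intro hX
      refine ⟨hX, ?_⟩
      have hW' : W = A := hW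
      rw [hW', hX]
      exact Relation.EqvGen.refl _
  ext U
  constructor
  · rintro ⟨W, hW, rfl⟩
    have := hcl W hW
    rw [Set.mem_singleton_iff, this, Set.sUnion_singleton]
  · intro hU
    refine ⟨A, rfl, ?_⟩
    rw [hcl A rfl, Set.sUnion_singleton]
    exact hU

lemma iterate_fixed (A : Set V) (t : ℕ) :
    (step Gpuz Gppl σ τ θ)^[t] {A} = {A} := by
  induction t with
  | zero => rfl
  | succ n ih => rw [Function.iterate_succ_apply', ih, step_fixed]

lemma solveSet_at (A : Set V) (h : solveSet Gpuz Gppl σ τ θ A) :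
    ∃ t₀, ∀ t, t₀ ≤ t → (step Gpuz Gppl σ τ θ)^[t] (sing A) = {A} := by
  obtain ⟨t₀, h₀⟩ := h
  refine ⟨t₀, fun t ht => ?_⟩
  obtain ⟨d, rfl⟩ := Nat.exists_eq_add_of_le ht
  rw [Nat.add_comm, Function.iterate_add_apply, h₀, iterate_fixed]

/-! ### Invariants of `step` -/

lemma self_mem_class {P : Set (Set V)} {W : Set V} (hW : W ∈ P) :
    W ∈ {W' | W' ∈ P ∧ Relation.EqvGen (rel Gpuz Gppl σ τ θ P) W W'} :=
  ⟨hW, Relation.EqvGen.refl _⟩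

lemma step_nonempty {P : Set (Set V)} (h : ∀ W ∈ P, W.Nonempty) :
    ∀ U ∈ step Gpuz Gppl σ τ θ P, U.Nonempty := by
  rintro U ⟨W, hW, rfl⟩
  obtain ⟨x, hx⟩ := h W hW
  exact ⟨x, Set.mem_sUnion.mpr ⟨W, self_mem_class hW, hx⟩⟩

lemma step_subset {P : Set (Set V)} {S : Set V} (h : ∀ W ∈ P, W ⊆ S) :
    ∀ U ∈ step Gpuz Gppl σ τ θ P, U ⊆ S := by
  rintro U ⟨W, hW, rfl⟩ x hx
  obtain ⟨W', hW', hxW'⟩ := Set.mem_sUnion.mp hx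
  exact h W' hW'.1 hxW'

lemma step_sUnion (P : Set (Set V)) :
    ⋃₀ (step Gpuz Gppl σ τ θ P) = ⋃₀ P := by
  apply Set.Subset.antisymm
  · rintro x ⟨U, ⟨W, hW, rfl⟩, hx⟩
    obtain ⟨W', hW', hxW'⟩ := Set.mem_sUnion.mp hx
    exact ⟨W', hW'.1, hxW'⟩
  · rintro x ⟨W, hW, hx⟩
    exact ⟨_, ⟨W, hW, rfl⟩, Set.mem_sUnion.mpr ⟨W, self_mem_class hW, hx⟩⟩

lemma step_pairwise {P : Set (Set V)} (h : P.Pairwise Disjoint) :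
    (step Gpuz Gppl σ τ θ P).Pairwise Disjoint := by
  rintro U₁ ⟨W₁, hW₁, rfl⟩ U₂ ⟨W₂, hW₂, rfl⟩ hne
  have hnE : ¬ Relation.EqvGen (rel Gpuz Gppl σ τ θ P) W₁ W₂ := by
    intro hE
    exact hne (congrArg Set.sUnion (class_eq (P := P) hE))
  rw [Set.disjoint_sUnion_left]
  rintro X ⟨hXP, hXE⟩
  rw [Set.disjoint_sUnion_right]
  rintro Y ⟨hYP, hYE⟩
  have hXY : X ≠ Y := by
    rintro rfl
    exact hnE (hXE.trans _ _ _ (hYE.symm _ _))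
  exact h hXP hYP hXY

lemma iter_nonempty {P : Set (Set V)} (h : ∀ W ∈ P, W.Nonempty) (t : ℕ) :
    ∀ U ∈ (step Gpuz Gppl σ τ θ)^[t] P, U.Nonempty := by
  induction t with
  | zero => exact h
  | succ n ih => rw [Function.iterate_succ_apply']; exact step_nonempty ih

lemma iter_subset {P : Set (Set V)} {S : Set V} (h : ∀ W ∈ P, W ⊆ S) (t : ℕ) :
    ∀ U ∈ (step Gpuz Gppl σ τ θ)^[t] P, U ⊆ S := by
  induction t with
  | zero => exact h
  | succ n ih => rw [Function.iterate_succ_apply']; exact step_subset ih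

lemma iter_sUnion (P : Set (Set V)) (t : ℕ) :
    ⋃₀ ((step Gpuz Gppl σ τ θ)^[t] P) = ⋃₀ P := by
  induction t with
  | zero => rfl
  | succ n ih => rw [Function.iterate_succ_apply', step_sUnion]; exact ih

lemma iter_pairwise {P : Set (Set V)} (h : P.Pairwise Disjoint) (t : ℕ) :
    ((step Gpuz Gppl σ τ θ)^[t] P).Pairwise Disjoint := by
  induction t with
  | zero => exact h
  | succ n ih => rw [Function.iterate_succ_apply']; exact step_pairwise ih

/-! ### Simulation -/

lemma eqvGen_lift {P Q : Set (Set V)} (h : ∀ W ∈ P, ∃ U ∈ Q, W ⊆ U)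
    {W₁ W₂ : Set V} (hE : Relation.EqvGen (rel Gpuz Gppl σ τ θ P) W₁ W₂) :
    (∀ U₁ ∈ Q, W₁ ⊆ U₁ → ∃ U₂ ∈ Q, W₂ ⊆ U₂ ∧
        Relation.EqvGen (rel Gpuz Gppl σ τ θ Q) U₁ U₂) ∧
    (∀ U₂ ∈ Q, W₂ ⊆ U₂ → ∃ U₁ ∈ Q, W₁ ⊆ U₁ ∧
        Relation.EqvGen (rel Gpuz Gppl σ τ θ Q) U₂ U₁) := by
  induction hE with
  | rel a b hab =>
    constructor
    · intro U₁ hU₁ hsub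
      obtain ⟨U₂, hU₂, hsub₂⟩ := h b hab.2.1
      refine ⟨U₂, hU₂, hsub₂, ?_⟩
      by_cases hEq : U₁ = U₂
      · rw [hEq]; exact Relation.EqvGen.refl _
      · exact Relation.EqvGen.rel _ _ ⟨hU₁, hU₂, Linked.lift hab.2.2 hsub hsub₂ hEq⟩
    · intro U₂ hU₂ hsub
      obtain ⟨U₁, hU₁, hsub₁⟩ := h a hab.1
      refine ⟨U₁, hU₁, hsub₁, ?_⟩
      by_cases hEq : U₂ = U₁
      · rw [hEq]; exact Relation.EqvGen.refl _
      · exact Relation.EqvGen.rel _ _ ⟨hU₂, hU₁, Linked.lift (linked_symm hab.2.2) hsub hsub₁ hEq⟩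
  | refl a =>
    exact ⟨fun U hU hsub => ⟨U, hU, hsub, Relation.EqvGen.refl _⟩,
      fun U hU hsub => ⟨U, hU, hsub, Relation.EqvGen.refl _⟩⟩
  | symm a b _ ih => exact ⟨ih.2, ih.1⟩
  | trans a b c _ _ ih₁ ih₂ =>
    constructor
    · intro U₁ hU₁ hsub
      obtain ⟨U₂, hU₂, hsub₂, hE₁⟩ := ih₁.1 U₁ hU₁ hsub
      obtain ⟨U₃, hU₃, hsub₃, hE₂⟩ := ih₂.1 U₂ hU₂ hsub₂
      exact ⟨U₃, hU₃, hsub₃, hE₁.trans _ _ _ hE₂⟩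
    · intro U₃ hU₃ hsub
      obtain ⟨U₂, hU₂, hsub₂, hE₂⟩ := ih₂.2 U₃ hU₃ hsub
      obtain ⟨U₁, hU₁, hsub₁, hE₁⟩ := ih₁.2 U₂ hU₂ hsub₂
      exact ⟨U₁, hU₁, hsub₁, hE₂.trans _ _ _ hE₁⟩

lemma simStep {P Q : Set (Set V)} (h : ∀ W ∈ P, ∃ U ∈ Q, W ⊆ U) :
    ∀ W ∈ step Gpuz Gppl σ τ θ P, ∃ U ∈ step Gpuz Gppl σ τ θ Q, W ⊆ U := by
  rintro W ⟨W₀, hW₀, rfl⟩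
  obtain ⟨U₀, hU₀, hsub₀⟩ := h W₀ hW₀
  refine ⟨⋃₀ {U' | U' ∈ Q ∧ Relation.EqvGen (rel Gpuz Gppl σ τ θ Q) U₀ U'},
    ⟨U₀, hU₀, rfl⟩, ?_⟩
  rintro x hx
  obtain ⟨W', ⟨hW'P, hW'E⟩, hxW'⟩ := Set.mem_sUnion.mp hx
  obtain ⟨U', hU', hsub', hE'⟩ := (eqvGen_lift h hW'E).1 U₀ hU₀ hsub₀
  exact Set.mem_sUnion.mpr ⟨U', ⟨hU', hE'⟩, hsub' hxW'⟩

lemma simIter {P Q : Set (Set V)} (h : ∀ W ∈ P, ∃ U ∈ Q, W ⊆ U) (t : ℕ) :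
    ∀ W ∈ (step Gpuz Gppl σ τ θ)^[t] P, ∃ U ∈ (step Gpuz Gppl σ τ θ)^[t] Q, W ⊆ U := by
  induction t with
  | zero => exact h
  | succ n ih =>
    rw [Function.iterate_succ_apply', Function.iterate_succ_apply']
    exact simStep ih

/-! ### Facts about `sing` and `solveSet` -/

lemma sing_nonempty (A : Set V) : ∀ W ∈ sing A, Set.Nonempty W := by
  rintro W ⟨v, hv, rfl⟩; exact ⟨v, rfl⟩

lemma sing_subset (A : Set V) : ∀ W ∈ sing A, W ⊆ A := by
  rintro W ⟨v, hv, rfl⟩ x hx; rw [hx]; exact hv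

lemma sing_sUnion (A : Set V) : ⋃₀ sing A = A := by
  apply Set.Subset.antisymm
  · rintro x ⟨W, ⟨v, hv, rfl⟩, hx⟩; rw [hx]; exact hv
  · intro x hx; exact ⟨{x}, ⟨x, hx, rfl⟩, rfl⟩

lemma sing_pairwise (A : Set V) : (sing A).Pairwise Disjoint := by
  rintro W₁ ⟨v₁, hv₁, rfl⟩ W₂ ⟨v₂, hv₂, rfl⟩ hne
  rw [Set.disjoint_singleton]
  intro hEq; exact hne (by rw [hEq])

lemma solveSet_nonempty {A : Set V} (h : solveSet Gpuz Gppl σ τ θ A) : A.Nonempty := by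
  obtain ⟨t, ht⟩ := h
  have : A ∈ (step Gpuz Gppl σ τ θ)^[t] (sing A) := by rw [ht]; rfl
  exact iter_nonempty (sing_nonempty A) t A this

lemma solveSet_singleton (v : V) : solveSet Gpuz Gppl σ τ θ {v} := by
  refine ⟨0, ?_⟩
  simp only [Function.iterate_zero, id_eq]
  ext S
  constructor
  · rintro ⟨u, hu, rfl⟩
    rw [Set.mem_singleton_iff.mp hu]
    rfl
  · intro hS
    exact ⟨v, rfl, hS⟩

/-- The main pairwise merge lemma. -/
lemma solveSet_union {A B : Set V} (hA : solveSet Gpuz Gppl σ τ θ A)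
    (hB : solveSet Gpuz Gppl σ τ θ B) (hdisj : Disjoint A B)
    (hlink : Linked Gpuz Gppl σ τ θ A B) :
    solveSet Gpuz Gppl σ τ θ (A ∪ B) := by
  obtain ⟨tA, hA'⟩ := solveSet_at A hA
  obtain ⟨tB, hB'⟩ := solveSet_at B hB
  set t := max tA tB with ht
  have hAt : (step Gpuz Gppl σ τ θ)^[t] (sing A) = {A} := hA' t (le_max_left _ _)
  have hBt : (step Gpuz Gppl σ τ θ)^[t] (sing B) = {B} := hB' t (le_max_right _ _)
  have hAne : A.Nonempty := solveSet_nonempty hA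
  have hBne : B.Nonempty := solveSet_nonempty hB
  set Q := (step Gpuz Gppl σ τ θ)^[t] (sing (A ∪ B)) with hQ
  -- simulate
  have hsimA : ∀ W ∈ sing A, ∃ U ∈ sing (A ∪ B), W ⊆ U := by
    rintro W ⟨v, hv, rfl⟩; exact ⟨{v}, ⟨v, Or.inl hv, rfl⟩, subset_rfl⟩
  have hsimB : ∀ W ∈ sing B, ∃ U ∈ sing (A ∪ B), W ⊆ U := by
    rintro W ⟨v, hv, rfl⟩; exact ⟨{v}, ⟨v, Or.inr hv, rfl⟩, subset_rfl⟩
  have hUA : ∃ U ∈ Q, A ⊆ U := by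
    apply simIter hsimA t
    rw [hAt]; rfl
  have hUB : ∃ U ∈ Q, B ⊆ U := by
    apply simIter hsimB t
    rw [hBt]; rfl
  obtain ⟨U, hU, hAU⟩ := hUA
  obtain ⟨U', hU', hBU'⟩ := hUB
  -- partition facts about Q
  have hQne : ∀ W ∈ Q, W.Nonempty := iter_nonempty (sing_nonempty _) t
  have hQsub : ∀ W ∈ Q, W ⊆ A ∪ B := iter_subset (sing_subset _) t
  have hQun : ⋃₀ Q = A ∪ B := by rw [hQ, iter_sUnion, sing_sUnion]
  have hQpw : Q.Pairwise Disjoint := iter_pairwise (sing_pairwise _) t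
  by_cases hEq : U = U'
  · -- Q = {A ∪ B}
    have hUeq : U = A ∪ B := Set.Subset.antisymm (hQsub U hU)
      (Set.union_subset hAU (hEq ▸ hBU'))
    have : Q = {A ∪ B} := by
      apply Set.eq_singleton_iff_unique_mem.mpr
      refine ⟨hUeq ▸ hU, fun W hW => ?_⟩
      by_contra hne
      have hdW : Disjoint W U := hQpw hW hU (fun hc => hne (hc ▸ hUeq))
      obtain ⟨x, hx⟩ := hQne W hW
      exact (hdW.ne_of_mem hx (hUeq ▸ (hQsub W hW hx) : x ∈ U)) rfl
    exact ⟨t, this⟩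
  · -- U = A, U' = B, and Q = {A, B}
    have hdUU' : Disjoint U U' := hQpw hU hU' hEq
    have hUA' : U = A := by
      apply Set.Subset.antisymm _ hAU
      intro x hx
      rcases hQsub U hU hx with hxA | hxB
      · exact hxA
      · exact absurd rfl (hdUU'.ne_of_mem hx (hBU' hxB))
    have hU'B : U' = B := by
      apply Set.Subset.antisymm _ hBU'
      intro x hx
      rcases hQsub U' hU' hx with hxA | hxB
      · exact absurd rfl ((hdUU'.symm).ne_of_mem hx (hAU hxA))
      · exact hxB
    have hQeq : Q = {A, B} := by
      apply Set.Subset.antisymm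
      · intro W hW
        by_contra hne
        rw [Set.mem_insert_iff, Set.mem_singleton_iff] at hne
        push_neg at hne
        have hdA : Disjoint W U := hQpw hW hU (by rw [hUA']; exact fun hc => hne.1 hc)
        have hdB : Disjoint W U' := hQpw hW hU' (by rw [hU'B]; exact fun hc => hne.2 hc)
        obtain ⟨x, hx⟩ := hQne W hW
        rcases hQsub W hW hx with hxA | hxB
        · exact (hdA.ne_of_mem hx (hUA' ▸ hxA : x ∈ U)) rfl
        · exact (hdB.ne_of_mem hx (hU'B ▸ hxB : x ∈ U')) rfl
      · intro W hW
        rcases hW with rfl | hW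
        · exact hUA' ▸ hU
        · rw [Set.mem_singleton_iff] at hW
          rw [hW, ← hU'B]; exact hU'
    have hABne : A ≠ B := by
      rintro rfl
      obtain ⟨x, hx⟩ := hAne
      exact (hdisj.ne_of_mem hx hx) rfl
    -- one more step merges A and B
    refine ⟨t + 1, ?_⟩
    rw [Function.iterate_succ_apply']
    show step Gpuz Gppl σ τ θ Q = {A ∪ B}
    rw [hQeq]
    -- step {A, B} = {A ∪ B}
    have hclass : ∀ W, W ∈ ({A, B} : Set (Set V)) →
        {W' | W' ∈ ({A, B} : Set (Set V)) ∧ Relation.EqvGen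
          (fun X Y => X ∈ ({A, B} : Set (Set V)) ∧ Y ∈ ({A, B} : Set (Set V)) ∧
            Linked Gpuz Gppl σ τ θ X Y) W W'} = {A, B} := by
      intro W hW
      have hEAB : Relation.EqvGen
          (fun X Y => X ∈ ({A, B} : Set (Set V)) ∧ Y ∈ ({A, B} : Set (Set V)) ∧
            Linked Gpuz Gppl σ τ θ X Y) A B :=
        Relation.EqvGen.rel _ _ ⟨Or.inl rfl, Or.inr rfl, hlink⟩
      ext X
      simp only [Set.mem_setOf_eq]
      constructor
      · rintro ⟨h1, -⟩; exact h1
      · intro hX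
        refine ⟨hX, ?_⟩
        rcases hW with rfl | hW
        · rcases hX with rfl | hX
          · exact Relation.EqvGen.refl _
          · rw [Set.mem_singleton_iff] at hX; rw [hX]; exact hEAB
        · rw [Set.mem_singleton_iff] at hW
          subst hW
          rcases hX with rfl | hX
          · exact hEAB.symm _ _
          · rw [Set.mem_singleton_iff] at hX; rw [hX]; exact Relation.EqvGen.refl _
    ext U₀
    constructor
    · rintro ⟨W, hW, rfl⟩
      rw [Set.mem_singleton_iff, hclass W hW]
      rw [Set.sUnion_insert, Set.sUnion_singleton]
    · intro hU₀
      refine ⟨A, Or.inl rfl, ?_⟩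
      rw [hclass A (Or.inl rfl), Set.sUnion_insert, Set.sUnion_singleton]
      exact hU₀

/-! ### Connectivity of classes and growing unions -/

lemma class_conn {P : Set (Set V)} {W₀ X Y : Set V}
    (hE : Relation.EqvGen (rel Gpuz Gppl σ τ θ P) X Y) :
    (Relation.EqvGen (rel Gpuz Gppl σ τ θ P) W₀ X →
      Relation.EqvGen (rel Gpuz Gppl σ τ θ P) W₀ Y ∧
      Relation.EqvGen (rel Gpuz Gppl σ τ θ
        {W' | W' ∈ P ∧ Relation.EqvGen (rel Gpuz Gppl σ τ θ P) W₀ W'}) X Y) ∧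
    (Relation.EqvGen (rel Gpuz Gppl σ τ θ P) W₀ Y →
      Relation.EqvGen (rel Gpuz Gppl σ τ θ P) W₀ X ∧
      Relation.EqvGen (rel Gpuz Gppl σ τ θ
        {W' | W' ∈ P ∧ Relation.EqvGen (rel Gpuz Gppl σ τ θ P) W₀ W'}) X Y) := by
  induction hE with
  | rel a b hab =>
    constructor
    · intro h0a
      have h0b : Relation.EqvGen (rel Gpuz Gppl σ τ θ P) W₀ b :=
        h0a.trans _ _ _ (Relation.EqvGen.rel _ _ hab)
      exact ⟨h0b, Relation.EqvGen.rel _ _ ⟨⟨hab.1, h0a⟩, ⟨hab.2.1, h0b⟩, hab.2.2⟩⟩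
    · intro h0b
      have h0a : Relation.EqvGen (rel Gpuz Gppl σ τ θ P) W₀ a :=
        h0b.trans _ _ _ ((Relation.EqvGen.rel _ _ hab).symm _ _)
      exact ⟨h0a, Relation.EqvGen.rel _ _ ⟨⟨hab.1, h0a⟩, ⟨hab.2.1, h0b⟩, hab.2.2⟩⟩
  | refl a =>
    exact ⟨fun h => ⟨h, Relation.EqvGen.refl _⟩, fun h => ⟨h, Relation.EqvGen.refl _⟩⟩
  | symm a b _ ih =>
    refine ⟨fun h => ?_, fun h => ?_⟩
    · obtain ⟨h', hE'⟩ := ih.2 h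
      exact ⟨h', hE'.symm _ _⟩
    · obtain ⟨h', hE'⟩ := ih.1 h
      exact ⟨h', hE'.symm _ _⟩
  | trans a b c _ _ ih₁ ih₂ =>
    refine ⟨fun h => ?_, fun h => ?_⟩
    · obtain ⟨hb, hE₁⟩ := ih₁.1 h
      obtain ⟨hc, hE₂⟩ := ih₂.1 hb
      exact ⟨hc, hE₁.trans _ _ _ hE₂⟩
    · obtain ⟨hb, hE₂⟩ := ih₂.2 h
      obtain ⟨ha, hE₁⟩ := ih₁.2 hb
      exact ⟨ha, hE₁.trans _ _ _ hE₂⟩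

lemma crossing {C D : Set (Set V)} (hDC : D ⊆ C)
    (hconn : ∀ X ∈ C, ∀ Y ∈ C, Relation.EqvGen (rel Gpuz Gppl σ τ θ C) X Y)
    {X₀ Y₀ : Set V} (hX₀ : X₀ ∈ C) (hX₀D : X₀ ∉ D) (hY₀ : Y₀ ∈ D) :
    ∃ Z ∈ C, Z ∉ D ∧ ∃ Y ∈ D, Linked Gpuz Gppl σ τ θ Z Y := by
  have hE := hconn Y₀ (hDC hY₀) X₀ hX₀
  suffices H : ∀ a b : Set V, Relation.EqvGen (rel Gpuz Gppl σ τ θ C) a b →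
      ((a ∈ D → b ∈ D ∨ ∃ Z ∈ C, Z ∉ D ∧ ∃ Y ∈ D, Linked Gpuz Gppl σ τ θ Z Y) ∧
       (b ∈ D → a ∈ D ∨ ∃ Z ∈ C, Z ∉ D ∧ ∃ Y ∈ D, Linked Gpuz Gppl σ τ θ Z Y)) by
    rcases (H _ _ hE).1 hY₀ with h | h
    · exact absurd h hX₀D
    · exact h
  intro a b hab
  induction hab with
  | rel a b hab =>
    constructor
    · intro ha
      by_cases hb : b ∈ D
      · exact Or.inl hb
      · exact Or.inr ⟨b, hab.2.1, hb, a, ha, linked_symm hab.2.2⟩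
    · intro hb
      by_cases ha : a ∈ D
      · exact Or.inl ha
      · exact Or.inr ⟨a, hab.1, ha, b, hb, hab.2.2⟩
  | refl a => exact ⟨Or.inl, Or.inl⟩
  | symm a b _ ih => exact ⟨ih.2, ih.1⟩
  | trans a b c _ _ ih₁ ih₂ =>
    constructor
    · intro ha
      rcases ih₁.1 ha with hb | g
      · exact ih₂.1 hb
      · exact Or.inr g
    · intro hc
      rcases ih₂.2 hc with hb | g
      · exact ih₁.2 hb
      · exact Or.inr g

lemma solveSet_sUnion {C : Set (Set V)}
    (hne : ∀ X ∈ C, X.Nonempty) (hsolve : ∀ X ∈ C, solveSet Gpuz Gppl σ τ θ X)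
    (hdisj : C.Pairwise Disjoint)
    (hconn : ∀ X ∈ C, ∀ Y ∈ C, Relation.EqvGen (rel Gpuz Gppl σ τ θ C) X Y)
    (hCne : C.Nonempty) : solveSet Gpuz Gppl σ τ θ (⋃₀ C) := by
  obtain ⟨W₀, hW₀⟩ := hCne
  suffices H : ∀ n (D : Set (Set V)), D ⊆ C → D.Nonempty → (C \ D).ncard = n →
      solveSet Gpuz Gppl σ τ θ (⋃₀ D) → solveSet Gpuz Gppl σ τ θ (⋃₀ C) by
    refine H _ {W₀} (Set.singleton_subset_iff.mpr hW₀) ⟨W₀, rfl⟩ rfl ?_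
    rw [Set.sUnion_singleton]
    exact hsolve W₀ hW₀
  intro n
  induction n with
  | zero =>
    intro D hDC hDne hcard hsol
    have hempty : C \ D = ∅ := (Set.ncard_eq_zero (Set.toFinite _)).mp hcard
    have : C = D := Set.Subset.antisymm (Set.diff_eq_empty.mp hempty) hDC
    rw [this]; exact hsol
  | succ n ih =>
    intro D hDC hDne hcard hsol
    by_cases hCD : C ⊆ D
    · rw [Set.Subset.antisymm hCD hDC]; exact hsol
    · obtain ⟨X₀, hX₀C, hX₀D⟩ := Set.not_subset.mp hCD
      obtain ⟨Y₀, hY₀⟩ := hDne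
      obtain ⟨Z, hZC, hZD, Y, hYD, hZY⟩ := crossing hDC hconn hX₀C hX₀D hY₀
      have hZdisj : Disjoint Z (⋃₀ D) := by
        rw [Set.disjoint_sUnion_right]
        intro T hT
        exact hdisj hZC (hDC hT) (fun h => hZD (h ▸ hT))
      have hZne : Z.Nonempty := hne Z hZC
      have hZneU : Z ≠ ⋃₀ D := by
        intro h
        obtain ⟨x, hx⟩ := hZne
        exact (hZdisj.ne_of_mem hx (h ▸ hx)) rfl
      have hlink : Linked Gpuz Gppl σ τ θ Z (⋃₀ D) :=
        Linked.lift hZY subset_rfl (Set.subset_sUnion_of_mem hYD) hZneU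
      have hsol' : solveSet Gpuz Gppl σ τ θ (⋃₀ insert Z D) := by
        rw [Set.sUnion_insert]
        exact solveSet_union (hsolve Z hZC) hsol hZdisj hlink
      refine ih (insert Z D) (Set.insert_subset hZC hDC) ⟨Z, Set.mem_insert _ _⟩ ?_ hsol'
      have hdiff : C \ insert Z D = (C \ D) \ {Z} := by
        ext T
        simp only [Set.mem_diff, Set.mem_insert_iff, Set.mem_singleton_iff]
        tauto
      have hZmem : Z ∈ C \ D := Set.mem_diff_of_mem hZC hZD
      rw [hdiff, Set.ncard_diff_singleton_of_mem hZmem, hcard]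
      omega

lemma exists_mid {C : Set (Set V)} {k : ℕ}
    (hne : ∀ X ∈ C, X.Nonempty) (hsolve : ∀ X ∈ C, solveSet Gpuz Gppl σ τ θ X)
    (hdisj : C.Pairwise Disjoint)
    (hconn : ∀ X ∈ C, ∀ Y ∈ C, Relation.EqvGen (rel Gpuz Gppl σ τ θ C) X Y)
    (hCne : C.Nonempty) (hsmall : ∀ X ∈ C, X.ncard < k) (hbig : k ≤ (⋃₀ C).ncard) :
    ∃ A : Set V, k ≤ A.ncard ∧ A.ncard ≤ 2 * k ∧ solveSet Gpuz Gppl σ τ θ A := by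
  obtain ⟨W₀, hW₀⟩ := hCne
  suffices H : ∀ n (D : Set (Set V)), D ⊆ C → D.Nonempty → (C \ D).ncard = n →
      solveSet Gpuz Gppl σ τ θ (⋃₀ D) → (⋃₀ D).ncard < k →
      ∃ A : Set V, k ≤ A.ncard ∧ A.ncard ≤ 2 * k ∧ solveSet Gpuz Gppl σ τ θ A by
    by_cases hW₀k : k ≤ W₀.ncard
    · exact absurd (hsmall W₀ hW₀) (not_lt.mpr hW₀k)
    · refine H _ {W₀} (Set.singleton_subset_iff.mpr hW₀) ⟨W₀, rfl⟩ rfl ?_ ?_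
      · rw [Set.sUnion_singleton]; exact hsolve W₀ hW₀
      · rw [Set.sUnion_singleton]; exact not_le.mp hW₀k
  intro n
  induction n with
  | zero =>
    intro D hDC hDne hcard hsol hlt
    have hempty : C \ D = ∅ := (Set.ncard_eq_zero (Set.toFinite _)).mp hcard
    have : C = D := Set.Subset.antisymm (Set.diff_eq_empty.mp hempty) hDC
    rw [← this] at hlt
    exact absurd hbig (not_le.mpr hlt)
  | succ n ih =>
    intro D hDC hDne hcard hsol hlt
    by_cases hCD : C ⊆ D
    · rw [← Set.Subset.antisymm hCD hDC] at hlt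
      exact absurd hbig (not_le.mpr hlt)
    · obtain ⟨X₀, hX₀C, hX₀D⟩ := Set.not_subset.mp hCD
      obtain ⟨Y₀, hY₀⟩ := hDne
      obtain ⟨Z, hZC, hZD, Y, hYD, hZY⟩ := crossing hDC hconn hX₀C hX₀D hY₀
      have hZdisj : Disjoint Z (⋃₀ D) := by
        rw [Set.disjoint_sUnion_right]
        intro T hT
        exact hdisj hZC (hDC hT) (fun h => hZD (h ▸ hT))
      have hZne : Z.Nonempty := hne Z hZC
      have hZneU : Z ≠ ⋃₀ D := by
        intro h
        obtain ⟨x, hx⟩ := hZne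
        exact (hZdisj.ne_of_mem hx (h ▸ hx)) rfl
      have hlink : Linked Gpuz Gppl σ τ θ Z (⋃₀ D) :=
        Linked.lift hZY subset_rfl (Set.subset_sUnion_of_mem hYD) hZneU
      have hsol' : solveSet Gpuz Gppl σ τ θ (Z ∪ ⋃₀ D) :=
        solveSet_union (hsolve Z hZC) hsol hZdisj hlink
      have hcardU : (Z ∪ ⋃₀ D).ncard = Z.ncard + (⋃₀ D).ncard :=
        Set.ncard_union_eq hZdisj (Set.toFinite _) (Set.toFinite _)
      have hlt2k : (Z ∪ ⋃₀ D).ncard < 2 * k := by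
        rw [hcardU]
        have := hsmall Z hZC
        omega
      by_cases hk : k ≤ (Z ∪ ⋃₀ D).ncard
      · exact ⟨Z ∪ ⋃₀ D, hk, le_of_lt hlt2k, hsol'⟩
      · have hsolins : solveSet Gpuz Gppl σ τ θ (⋃₀ insert Z D) := by
          rw [Set.sUnion_insert]; exact hsol'
        refine ih (insert Z D) (Set.insert_subset hZC hDC) ⟨Z, Set.mem_insert _ _⟩ ?_ hsolins ?_
        · have hdiff : C \ insert Z D = (C \ D) \ {Z} := by
            ext T
            simp only [Set.mem_diff, Set.mem_insert_iff, Set.mem_singleton_iff]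
            tauto
          have hZmem : Z ∈ C \ D := Set.mem_diff_of_mem hZC hZD
          rw [hdiff, Set.ncard_diff_singleton_of_mem hZmem, hcard]
          omega
        · rw [Set.sUnion_insert]
          exact not_le.mp hk

/-! ### Every part at any time is solved -/

lemma parts_solveSet (t : ℕ) :
    ∀ W ∈ (step Gpuz Gppl σ τ θ)^[t] (sing Set.univ), solveSet Gpuz Gppl σ τ θ W := by
  induction t with
  | zero =>
    rintro W ⟨v, -, rfl⟩
    exact solveSet_singleton v
  | succ n ih =>
    rw [Function.iterate_succ_apply']
    rintro W hW
    rw [mem_step] at hW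
    obtain ⟨W₀, hW₀, rfl⟩ := hW
    set P := (step Gpuz Gppl σ τ θ)^[n] (sing Set.univ) with hP
    set C := {W' | W' ∈ P ∧ Relation.EqvGen (rel Gpuz Gppl σ τ θ P) W₀ W'} with hC
    have hCP : C ⊆ P := fun X hX => hX.1
    apply solveSet_sUnion
    · exact fun X hX => iter_nonempty (sing_nonempty _) n X (hCP hX)
    · exact fun X hX => ih X (hCP hX)
    · exact (iter_pairwise (sing_pairwise _) n).mono hCP
    · intro X hX Y hY
      have hE : Relation.EqvGen (rel Gpuz Gppl σ τ θ P) X Y :=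
        (hX.2.symm _ _).trans _ _ _ hY.2
      exact ((class_conn hE).1 hX.2).2
    · exact ⟨W₀, hW₀, Relation.EqvGen.refl _⟩

/-! ### Transfer between the induced dynamics and the relativized ambient dynamics -/

/-- Push a family of sets of `↥A` to a family of sets of `V`. -/
def emb (A : Set V) : Set (Set ↥A) → Set (Set V) :=
  Set.image (fun S => (Subtype.val : ↥A → V) '' S)

lemma f_inj (A : Set V) : Function.Injective (fun S : Set ↥A => Subtype.val '' S) :=
  Set.image_injective.mpr Subtype.val_injective

lemma emb_inj (A : Set V) : Function.Injective (emb A) :=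
  Set.image_injective.mpr (f_inj A)

lemma induce_adj (G : SimpleGraph V) (A : Set V) (a b : ↥A) :
    (G.induce A).Adj a b ↔ G.Adj ↑a ↑b := Iff.rfl

lemma nbr_transfer (G : SimpleGraph V) (A : Set V) (v : ↥A) (S : Set ↥A) :
    nbrCount (G.induce A) v S = nbrCount G ↑v (Subtype.val '' S) := by
  unfold nbrCount
  have himg : {u ∈ Subtype.val '' S | G.Adj ↑v u} =
      Subtype.val '' {u ∈ S | (G.induce A).Adj v u} := by
    ext u
    simp only [Set.mem_setOf_eq, Set.mem_image]
    constructor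
    · rintro ⟨⟨w, hw, rfl⟩, hadj⟩
      exact ⟨w, ⟨hw, hadj⟩, rfl⟩
    · rintro ⟨w, ⟨hw, hadj⟩, rfl⟩
      exact ⟨⟨w, hw, rfl⟩, hadj⟩
  rw [himg, Set.ncard_image_of_injective _ Subtype.val_injective]

lemma linkedDir_transfer (A : Set V) (W W' : Set ↥A) :
    LinkedDir (Gpuz.induce A) (Gppl.induce A) σ τ θ W W' ↔
    LinkedDir Gpuz Gppl σ τ θ (Subtype.val '' W) (Subtype.val '' W') := by
  unfold LinkedDir
  constructor
  · rintro (⟨v₁, h₁, v₂, h₂, hpl, hpz⟩ | ⟨v₁, h₁, h⟩ | ⟨v₁, h₁, hp, hq⟩)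
    · exact Or.inl ⟨↑v₁, ⟨v₁, h₁, rfl⟩, ↑v₂, ⟨v₂, h₂, rfl⟩, hpl, hpz⟩
    · exact Or.inr (Or.inl ⟨↑v₁, ⟨v₁, h₁, rfl⟩, by rw [← nbr_transfer]; exact h⟩)
    · exact Or.inr (Or.inr ⟨↑v₁, ⟨v₁, h₁, rfl⟩, by rw [← nbr_transfer]; exact hp,
        by rw [← nbr_transfer]; exact hq⟩)
  · rintro (⟨v₁, ⟨w₁, hw₁, rfl⟩, v₂, ⟨w₂, hw₂, rfl⟩, hpl, hpz⟩ |
      ⟨v₁, ⟨w₁, hw₁, rfl⟩, h⟩ | ⟨v₁, ⟨w₁, hw₁, rfl⟩, hp, hq⟩)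
    · exact Or.inl ⟨w₁, hw₁, w₂, hw₂, hpl, hpz⟩
    · exact Or.inr (Or.inl ⟨w₁, hw₁, by rw [nbr_transfer]; exact h⟩)
    · exact Or.inr (Or.inr ⟨w₁, hw₁, by rw [nbr_transfer]; exact hp,
        by rw [nbr_transfer]; exact hq⟩)

lemma linked_transfer (A : Set V) (W W' : Set ↥A) :
    Linked (Gpuz.induce A) (Gppl.induce A) σ τ θ W W' ↔
    Linked Gpuz Gppl σ τ θ (Subtype.val '' W) (Subtype.val '' W') := by
  unfold Linked
  rw [← linkedDir_transfer, ← linkedDir_transfer]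
  constructor
  · rintro ⟨hne, h⟩
    exact ⟨fun hc => hne (f_inj A hc), h⟩
  · rintro ⟨hne, h⟩
    exact ⟨fun hc => hne (by rw [hc]), h⟩

lemma eqvGen_transfer_fwd {A : Set V} {P : Set (Set ↥A)} {X Y : Set ↥A}
    (h : Relation.EqvGen (rel (Gpuz.induce A) (Gppl.induce A) σ τ θ P) X Y) :
    Relation.EqvGen (rel Gpuz Gppl σ τ θ (emb A P))
      (Subtype.val '' X) (Subtype.val '' Y) := by
  induction h with
  | rel a b hab =>
    exact Relation.EqvGen.rel _ _
      ⟨⟨a, hab.1, rfl⟩, ⟨b, hab.2.1, rfl⟩, (linked_transfer A a b).mp hab.2.2⟩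
  | refl a => exact Relation.EqvGen.refl _
  | symm a b _ ih => exact ih.symm _ _
  | trans a b c _ _ ih₁ ih₂ => exact ih₁.trans _ _ _ ih₂

lemma eqvGen_transfer_bwd {A : Set V} {P : Set (Set ↥A)} {U U' : Set V}
    (h : Relation.EqvGen (rel Gpuz Gppl σ τ θ (emb A P)) U U') :
    (∀ X Y : Set ↥A, U = Subtype.val '' X → U' = Subtype.val '' Y →
      Relation.EqvGen (rel (Gpuz.induce A) (Gppl.induce A) σ τ θ P) X Y) ∧
    ((∃ X : Set ↥A, U = Subtype.val '' X) ↔ (∃ Y : Set ↥A, U' = Subtype.val '' Y)) := by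
  induction h with
  | rel a b hab =>
    obtain ⟨X₀, hX₀P, hX₀⟩ := hab.1
    obtain ⟨Y₀, hY₀P, hY₀⟩ := hab.2.1
    constructor
    · intro X Y hX hY
      have hXX : X = X₀ := f_inj A (by
        show Subtype.val '' X = Subtype.val '' X₀
        rw [← hX]; exact hX₀.symm)
      have hYY : Y = Y₀ := f_inj A (by
        show Subtype.val '' Y = Subtype.val '' Y₀
        rw [← hY]; exact hY₀.symm)
      subst hXX; subst hYY
      refine Relation.EqvGen.rel _ _ ⟨hX₀P, hY₀P, ?_⟩
      rw [linked_transfer, ← hX, ← hY]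
      exact hab.2.2
    · exact ⟨fun _ => ⟨Y₀, hY₀.symm⟩, fun _ => ⟨X₀, hX₀.symm⟩⟩
  | refl a =>
    refine ⟨fun X Y hX hY => ?_, Iff.rfl⟩
    have : X = Y := f_inj A (by
      show Subtype.val '' X = Subtype.val '' Y
      rw [← hX, ← hY])
    rw [this]
    exact Relation.EqvGen.refl _
  | symm a b _ ih =>
    exact ⟨fun X Y hX hY => (ih.1 Y X hY hX).symm _ _, ih.2.symm⟩
  | trans a b c _ _ ih₁ ih₂ =>
    refine ⟨fun X Z hX hZ => ?_, ih₁.2.trans ih₂.2⟩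
    obtain ⟨Ymid, hY⟩ := ih₁.2.mp ⟨X, hX⟩
    exact (ih₁.1 X Ymid hX hY).trans _ _ _ (ih₂.1 Ymid Z hY hZ)

lemma class_transfer {A : Set V} (P : Set (Set ↥A)) (W₀ : Set ↥A) (hW₀ : W₀ ∈ P) :
    (fun S : Set ↥A => Subtype.val '' S) ''
      {W' | W' ∈ P ∧ Relation.EqvGen (rel (Gpuz.induce A) (Gppl.induce A) σ τ θ P) W₀ W'} =
    {T | T ∈ emb A P ∧ Relation.EqvGen (rel Gpuz Gppl σ τ θ (emb A P))
      (Subtype.val '' W₀) T} := by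
  ext T
  simp only [Set.mem_image, Set.mem_setOf_eq]
  constructor
  · rintro ⟨X, ⟨hXP, hXE⟩, rfl⟩
    exact ⟨⟨X, hXP, rfl⟩, eqvGen_transfer_fwd hXE⟩
  · rintro ⟨⟨X, hXP, rfl⟩, hE⟩
    exact ⟨X, ⟨hXP, (eqvGen_transfer_bwd hE).1 W₀ X rfl rfl⟩, rfl⟩

lemma step_transfer (A : Set V) (P : Set (Set ↥A)) :
    emb A (step (Gpuz.induce A) (Gppl.induce A) σ τ θ P) =
      step Gpuz Gppl σ τ θ (emb A P) := by
  ext U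
  constructor
  · rintro ⟨W, hW, rfl⟩
    rw [mem_step] at hW
    obtain ⟨W₀, hW₀P, rfl⟩ := hW
    refine mem_step.mpr ⟨Subtype.val '' W₀, ⟨W₀, hW₀P, rfl⟩, ?_⟩
    show Subtype.val '' _ = _
    rw [Set.image_sUnion, class_transfer P W₀ hW₀P]
  · intro hU
    rw [mem_step] at hU
    obtain ⟨U₀, hU₀, rfl⟩ := hU
    obtain ⟨W₀, hW₀P, rfl⟩ := hU₀
    refine ⟨⋃₀ {W' | W' ∈ P ∧ Relation.EqvGen
      (rel (Gpuz.induce A) (Gppl.induce A) σ τ θ P) W₀ W'},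
      mem_step.mpr ⟨W₀, hW₀P, rfl⟩, ?_⟩
    show Subtype.val '' _ = _
    rw [Set.image_sUnion, class_transfer P W₀ hW₀P]

lemma iter_transfer (A : Set V) (P : Set (Set ↥A)) (t : ℕ) :
    emb A ((step (Gpuz.induce A) (Gppl.induce A) σ τ θ)^[t] P) =
      (step Gpuz Gppl σ τ θ)^[t] (emb A P) := by
  induction t with
  | zero => rfl
  | succ n ih =>
    rw [Function.iterate_succ_apply', Function.iterate_succ_apply', step_transfer, ih]

lemma sing_transfer (A : Set V) :
    emb A {S : Set ↥A | ∃ v, S = {v}} = sing A := by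
  ext T
  constructor
  · rintro ⟨S, ⟨v, rfl⟩, rfl⟩
    exact ⟨↑v, v.2, Set.image_singleton.symm ▸ rfl⟩
  · rintro ⟨v, hv, rfl⟩
    exact ⟨{⟨v, hv⟩}, ⟨⟨v, hv⟩, rfl⟩, Set.image_singleton⟩

lemma univ_transfer (A : Set V) :
    emb A {(Set.univ : Set ↥A)} = {A} := by
  show Set.image _ {(Set.univ : Set ↥A)} = {A}
  rw [Set.image_singleton]
  congr 1
  exact Subtype.coe_image_univ A

lemma solveSet_solveIn {A : Set V} (h : solveSet Gpuz Gppl σ τ θ A) :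
    SolveIn Gpuz Gppl σ τ θ A := by
  obtain ⟨t, ht⟩ := h
  refine ⟨t, ?_⟩
  apply emb_inj A
  show emb A ((step (Gpuz.induce A) (Gppl.induce A) σ τ θ)^[t] _) = _
  rw [iter_transfer, sing_transfer, ht, univ_transfer]

lemma sing_univ : sing (Set.univ : Set V) = {S : Set V | ∃ v, S = {v}} := by
  ext S
  constructor
  · rintro ⟨v, -, rfl⟩; exact ⟨v, rfl⟩
  · rintro ⟨v, rfl⟩; exact ⟨v, trivial, rfl⟩

end Aux13

/-- Lemma 2.3: for jigsaw percolation with any thresholds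
`σ, τ ≥ 1`, `θ ≥ τ`, started from singletons: (i) every part of the partition at any
time is internally solved; (ii) if `Solve` occurs then for every `1 ≤ k ≤ N/2` there is
an internally solved set `A` with `k ≤ |A| ≤ 2k`. -/
theorem stmt13 {V : Type*} [Fintype V] (Gpuz Gppl : SimpleGraph V)
    (σ τ : ℕ) (hσ : 1 ≤ σ) (hτ : 1 ≤ τ) (θ : ℕ∞) (hθ : (τ : ℕ∞) ≤ θ) :
    (∀ t : ℕ, ∀ W ∈ partAt Gpuz Gppl σ τ θ t, SolveIn Gpuz Gppl σ τ θ W) ∧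
    (Solve Gpuz Gppl σ τ θ →
      ∀ k : ℕ, 1 ≤ k → 2 * k ≤ Fintype.card V →
        ∃ A : Set V, k ≤ A.ncard ∧ A.ncard ≤ 2 * k ∧ SolveIn Gpuz Gppl σ τ θ A) := by
  constructor
  · intro t W hW
    apply Aux13.solveSet_solveIn
    apply Aux13.parts_solveSet t
    rw [Aux13.sing_univ]
    exact hW
  · intro hsolve k hk1 hk2
    by_cases hk : k = 1
    · subst hk
      have hpos : 0 < Fintype.card V := by omega
      obtain ⟨v⟩ := Fintype.card_pos_iff.mp hpos
      refine ⟨{v}, ?_, ?_, Aux13.solveSet_solveIn (Aux13.solveSet_singleton v)⟩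
      · rw [Set.ncard_singleton]
      · rw [Set.ncard_singleton]; omega
    · have hk2' : 2 ≤ k := by omega
      obtain ⟨T, hT⟩ := hsolve
      have hpred : ∃ t, ∃ W ∈ partAt Gpuz Gppl σ τ θ t, k ≤ W.ncard := by
        refine ⟨T, Set.univ, by rw [hT]; rfl, ?_⟩
        rw [Set.ncard_univ, Nat.card_eq_fintype_card]
        omega
      set t₀ := Nat.find hpred with ht₀def
      obtain ⟨W, hWmem, hWk⟩ := Nat.find_spec hpred
      rw [← ht₀def] at hWmem
      have ht₀pos : t₀ ≠ 0 := by
        intro h0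
        rw [h0] at hWmem
        obtain ⟨v, rfl⟩ := hWmem
        rw [Set.ncard_singleton] at hWk
        omega
      obtain ⟨s, hs⟩ := Nat.exists_eq_succ_of_ne_zero ht₀pos
      have hsmall : ∀ X ∈ partAt Gpuz Gppl σ τ θ s, X.ncard < k := by
        intro X hX
        by_contra hc
        exact Nat.find_min hpred (by omega : s < t₀) ⟨X, hX, not_lt.mp hc⟩
      rw [hs] at hWmem
      rw [show partAt Gpuz Gppl σ τ θ (s + 1) =
        step Gpuz Gppl σ τ θ (partAt Gpuz Gppl σ τ θ s) from
        Function.iterate_succ_apply' _ _ _] at hWmem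
      rw [Aux13.mem_step] at hWmem
      obtain ⟨W₀, hW₀, rfl⟩ := hWmem
      have hPe : (step Gpuz Gppl σ τ θ)^[s] (Aux13.sing Set.univ) =
          partAt Gpuz Gppl σ τ θ s := by
        rw [Aux13.sing_univ]; rfl
      set P := partAt Gpuz Gppl σ τ θ s with hP
      set C := {W' | W' ∈ P ∧
        Relation.EqvGen (Aux13.rel Gpuz Gppl σ τ θ P) W₀ W'} with hC
      have hCP : C ⊆ P := fun X hX => hX.1
      have hmain := Aux13.exists_mid (C := C) (k := k)
        (fun X hX => Aux13.iter_nonempty (Aux13.sing_nonempty _) s X (hPe ▸ hCP hX))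
        (fun X hX => Aux13.parts_solveSet s X (hPe ▸ hCP hX))
        ((hPe ▸ Aux13.iter_pairwise (Aux13.sing_pairwise _) s).mono hCP)
        (fun X hX Y hY => ((Aux13.class_conn
          ((hX.2.symm _ _).trans _ _ _ hY.2)).1 hX.2).2)
        ⟨W₀, hW₀, Relation.EqvGen.refl _⟩
        (fun X hX => hsmall X (hCP hX))
        hWk
      obtain ⟨A, h1, h2, hsol⟩ := hmain
      exact ⟨A, h1, h2, Aux13.solveSet_solveIn hsol⟩


end JigsawPerc
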